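/- (Cordes inequality) Let H be a complex Hilbert space and let T₁ and T₂ be bounded self-adjoint linear operators on H with T₁ ≥ 0 and T₂ ≥ 0. Then for every real p with 0 ≤ p ≤ 1, ‖T₁^p · T₂^p‖ ≤ ‖T₁ · T₂‖^p, where T^p denotes the p-th power of the non-negative operator T obtained via the continuous functional calculus. -/

import Mathlib

open scoped NNReal

set_option maxHeartbeats 1000000

open scoped NNReal ENNReal

namespace CordesAux

section rpowadd

variable {A : Type*} [PartialOrder A] [NormedRing A] [StarRing A]
  [NormedAlgebra ℝ A] [ContinuousFunctionalCalculus ℝ≥0 A (fun (a : A) => 0 ≤ a)]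
  [StarOrderedRing A] [ContinuousFunctionalCalculus ℝ A IsSelfAdjoint] [NonnegSpectrumClass ℝ A]

lemma rpow_add_of_ne (a : A) {x y : ℝ} (hx : 0 ≤ x) (hy : 0 ≤ y) (h : x + y ≠ 0)
    (ha : 0 ≤ a) : a ^ (x + y) = a ^ x * a ^ y := by
  simp only [CFC.rpow_def, NNReal.rpow_eq_pow]
  rw [← cfc_mul _ _ a (NNReal.continuous_rpow_const hx).continuousOn
    (NNReal.continuous_rpow_const hy).continuousOn]
  exact cfc_congr fun z _ => NNReal.rpow_add' h z

end rpowadd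

section cstar

variable {A : Type*} [CStarAlgebra A] [PartialOrder A] [StarOrderedRing A]

omit [PartialOrder A] [StarOrderedRing A] in
lemma radius_aux {S T : Set ℂ} (h : S \ {0} = T \ {0}) :
    (⨆ k ∈ S, (‖k‖₊ : ℝ≥0∞)) ≤ ⨆ k ∈ T, (‖k‖₊ : ℝ≥0∞) := by
  refine iSup₂_le fun k hk => ?_
  rcases eq_or_ne k 0 with rfl | hk0
  · simp
  · have hkT : k ∈ T := by
      have : k ∈ S \ {0} := ⟨hk, hk0⟩
      rw [h] at this
      exact this.1
    exact le_iSup₂ (f := fun k (_ : k ∈ T) => (‖k‖₊ : ℝ≥0∞)) k hkT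

omit [PartialOrder A] [StarOrderedRing A] in
lemma spectralRadius_mul_comm (a b : A) :
    spectralRadius ℂ (a * b) = spectralRadius ℂ (b * a) := by
  exact le_antisymm (radius_aux (spectrum.nonzero_mul_comm (𝕜 := ℂ) a b))
    (radius_aux (spectrum.nonzero_mul_comm (𝕜 := ℂ) b a))

lemma rpow_eq_cfc_real {a : A} (ha : 0 ≤ a) (p : ℝ) :
    a ^ p = cfc (fun x : ℝ => x ^ p) a := by
  rw [CFC.rpow_def, cfc_nnreal_eq_real _ a ha]
  refine cfc_congr fun x hx => ?_
  have hx0 : 0 ≤ x := spectrum_nonneg_of_nonneg ha hx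
  rw [NNReal.coe_rpow, Real.coe_toNNReal x hx0]

end cstar

end CordesAux

namespace CordesAux

section main

variable {A : Type*} [CStarAlgebra A] [PartialOrder A] [StarOrderedRing A] [Nontrivial A]

lemma sa_rpow (a : A) (p : ℝ) : IsSelfAdjoint (a ^ p) :=
  IsSelfAdjoint.of_nonneg CFC.rpow_nonneg

lemma mid {a b : A} (ha : 0 ≤ a) (hb : 0 ≤ b) {p q : ℝ} (hp : 0 ≤ p) (hq : 0 ≤ q)
    (hpq : 0 < p + q)
    (h1 : ‖a ^ p * b ^ p‖₊ ≤ ‖a * b‖₊ ^ p)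
    (h2 : ‖a ^ q * b ^ q‖₊ ≤ ‖a * b‖₊ ^ q) :
    ‖a ^ ((p + q) / 2) * b ^ ((p + q) / 2)‖₊ ≤ ‖a * b‖₊ ^ ((p + q) / 2) := by
  set m : ℝ := (p + q) / 2 with hm_def
  have hm0 : 0 ≤ m := by positivity
  have hmm : m + m = p + q := by rw [hm_def]; ring
  have hmm0 : m + m ≠ 0 := by rw [hmm]; exact hpq.ne'
  -- star identity
  have hstar : star (a ^ m * b ^ m) = b ^ m * a ^ m := by
    rw [star_mul, (sa_rpow a m).star_eq, (sa_rpow b m).star_eq]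
  have h0 : star (a ^ m * b ^ m) * (a ^ m * b ^ m) = b ^ m * (a ^ (p + q) * b ^ m) := by
    rw [hstar, ← hmm, rpow_add_of_ne a hm0 hm0 hmm0 ha]
    rw [mul_assoc, mul_assoc]
  have hsa : IsSelfAdjoint (b ^ m * (a ^ (p + q) * b ^ m)) :=
    h0 ▸ IsSelfAdjoint.star_mul_self (a ^ m * b ^ m)
  have e1 : ((‖a ^ m * b ^ m‖₊ ^ 2 : ℝ≥0) : ℝ≥0∞)
      = spectralRadius ℂ (b ^ m * (a ^ (p + q) * b ^ m)) := by
    rw [hsa.spectralRadius_eq_nnnorm, ← h0, CStarRing.nnnorm_star_mul_self, sq]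
  have e3 : (a ^ (p + q) * b ^ m) * b ^ m = a ^ (p + q) * b ^ (p + q) := by
    rw [mul_assoc, ← rpow_add_of_ne b hm0 hm0 hmm0 hb, hmm]
  have e4 : a ^ (p + q) * b ^ (p + q) = a ^ q * ((a ^ p * b ^ p) * b ^ q) := by
    rw [add_comm p q, rpow_add_of_ne a hq hp (by rw [add_comm]; exact hpq.ne') ha,
      add_comm q p, rpow_add_of_ne b hp hq hpq.ne' hb]
    rw [mul_assoc, mul_assoc]
  have e6 : ((a ^ p * b ^ p) * b ^ q) * a ^ q = (a ^ p * b ^ p) * (b ^ q * a ^ q) :=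
    mul_assoc _ _ _
  have e7 : spectralRadius ℂ ((a ^ p * b ^ p) * (b ^ q * a ^ q))
      ≤ (‖(a ^ p * b ^ p) * (b ^ q * a ^ q)‖₊ : ℝ≥0∞) :=
    spectrum.spectralRadius_le_nnnorm _
  have hbq : ‖b ^ q * a ^ q‖₊ = ‖a ^ q * b ^ q‖₊ := by
    have : b ^ q * a ^ q = star (a ^ q * b ^ q) := by
      rw [star_mul, (sa_rpow a q).star_eq, (sa_rpow b q).star_eq]
    rw [this, nnnorm_star]
  have key : (‖a ^ m * b ^ m‖₊ ^ 2 : ℝ≥0) ≤ (‖a * b‖₊ ^ m) ^ 2 := by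
    rw [← ENNReal.coe_le_coe]
    calc ((‖a ^ m * b ^ m‖₊ ^ 2 : ℝ≥0) : ℝ≥0∞)
        = spectralRadius ℂ (b ^ m * (a ^ (p + q) * b ^ m)) := e1
      _ = spectralRadius ℂ ((a ^ (p + q) * b ^ m) * b ^ m) := spectralRadius_mul_comm _ _
      _ = spectralRadius ℂ (a ^ q * ((a ^ p * b ^ p) * b ^ q)) := by rw [e3, e4]
      _ = spectralRadius ℂ (((a ^ p * b ^ p) * b ^ q) * a ^ q) := spectralRadius_mul_comm _ _
      _ ≤ (‖(a ^ p * b ^ p) * (b ^ q * a ^ q)‖₊ : ℝ≥0∞) := by rw [e6]; exact e7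
      _ ≤ ((‖a ^ p * b ^ p‖₊ * ‖b ^ q * a ^ q‖₊ : ℝ≥0) : ℝ≥0∞) :=
          ENNReal.coe_le_coe.mpr (nnnorm_mul_le _ _)
      _ ≤ ((‖a * b‖₊ ^ p * ‖a * b‖₊ ^ q : ℝ≥0) : ℝ≥0∞) := by
          rw [hbq]
          exact ENNReal.coe_le_coe.mpr (mul_le_mul' h1 h2)
      _ = (((‖a * b‖₊ ^ m) ^ 2 : ℝ≥0) : ℝ≥0∞) := by
          rw [← NNReal.rpow_add' (h := hpq.ne'), ← hmm]
          congr 1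
          rw [← NNReal.rpow_natCast (‖a * b‖₊ ^ m) 2, ← NNReal.rpow_mul]
          norm_num
          ring_nf
  exact (pow_le_pow_iff_left₀ (by positivity) (by positivity) two_ne_zero).mp key

lemma P_zero {a b : A} (ha : 0 ≤ a) (hb : 0 ≤ b) :
    ‖a ^ (0 : ℝ) * b ^ (0 : ℝ)‖₊ ≤ ‖a * b‖₊ ^ (0 : ℝ) := by
  rw [CFC.rpow_zero a ha, CFC.rpow_zero b hb, NNReal.rpow_zero, one_mul, nnnorm_one]

lemma P_one {a b : A} (ha : 0 ≤ a) (hb : 0 ≤ b) :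
    ‖a ^ (1 : ℝ) * b ^ (1 : ℝ)‖₊ ≤ ‖a * b‖₊ ^ (1 : ℝ) := by
  rw [CFC.rpow_one a ha, CFC.rpow_one b hb, NNReal.rpow_one]

lemma P_dyadic {a b : A} (ha : 0 ≤ a) (hb : 0 ≤ b) :
    ∀ n k : ℕ, k ≤ 2 ^ n →
      ‖a ^ ((k : ℝ) / 2 ^ n) * b ^ ((k : ℝ) / 2 ^ n)‖₊ ≤ ‖a * b‖₊ ^ ((k : ℝ) / 2 ^ n) := by
  intro n
  induction n with
  | zero =>
    intro k hk
    interval_cases k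
    · simpa using P_zero ha hb
    · simpa using P_one ha hb
  | succ n ih =>
    intro k hk
    rcases Nat.eq_zero_or_pos k with rfl | hkpos
    · simpa using P_zero ha hb
    · set i : ℕ := (k + 1) / 2 with hi_def
      set j : ℕ := k / 2 with hj_def
      have hij : i + j = k := by omega
      have hi : i ≤ 2 ^ n := by
        have : (2:ℕ) ^ (n+1) = 2 * 2 ^ n := by ring
        omega
      have hj : j ≤ 2 ^ n := by
        have : (2:ℕ) ^ (n+1) = 2 * 2 ^ n := by ring
        omega
      have hipos : 0 < i := by omega
      have hkey : ((k : ℝ)) / 2 ^ (n+1) = (((i : ℝ) / 2 ^ n) + ((j : ℝ) / 2 ^ n)) / 2 := by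
        have : ((i : ℝ)) + (j : ℝ) = (k : ℝ) := by exact_mod_cast congrArg Nat.cast hij
        field_simp
        rw [← this]
        ring
      rw [hkey]
      have h1pos : 0 < (i : ℝ) / 2 ^ n :=
        div_pos (by exact_mod_cast hipos) (by positivity)
      have hsum : 0 < (i : ℝ) / 2 ^ n + (j : ℝ) / 2 ^ n :=
        add_pos_of_pos_of_nonneg h1pos (by positivity)
      exact mid ha hb (by positivity) (by positivity) hsum (ih i hi) (ih j hj)

lemma cont_rpow {a : A} (ha : 0 ≤ a) :
    ContinuousOn (fun p : ℝ => a ^ p) (Set.Ioi (0 : ℝ)) := by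
  have hsa : IsSelfAdjoint a := .of_nonneg ha
  rw [continuousOn_iff_continuous_restrict]
  set F : (Set.Ioi (0 : ℝ)) → C(spectrum ℝ a, ℝ) := fun p =>
    ⟨fun x => (x : ℝ) ^ (p : ℝ),
      (Real.continuous_rpow_const (le_of_lt p.2)).comp continuous_subtype_val⟩ with hF_def
  have hF : Continuous F := by
    apply ContinuousMap.continuous_of_continuous_uncurry
    exact Continuous.rpow (continuous_subtype_val.comp continuous_snd)
      (continuous_subtype_val.comp continuous_fst) (fun x => Or.inr x.1.2)
  have heq : (Set.Ioi (0 : ℝ)).domRestrict (fun p : ℝ => a ^ p) = fun p => cfcHom hsa (F p) := by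
    funext p
    have hc : ContinuousOn (fun x : ℝ => x ^ (p : ℝ)) (spectrum ℝ a) :=
      (Real.continuous_rpow_const p.2.le).continuousOn
    simp only [Set.domRestrict_apply]
    rw [rpow_eq_cfc_real ha, cfc_apply (fun x : ℝ => x ^ (p : ℝ)) a hsa hc]
    rfl
  rw [heq]
  exact (cfcHom_isClosedEmbedding hsa).continuous.comp hF

theorem cordes {a b : A} (ha : 0 ≤ a) (hb : 0 ≤ b) {p : ℝ} (hp0 : 0 ≤ p) (hp1 : p ≤ 1) :
    ‖a ^ p * b ^ p‖ ≤ ‖a * b‖ ^ p := by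
  rcases eq_or_lt_of_le hp0 with rfl | hp
  · rw [CFC.rpow_zero a ha, CFC.rpow_zero b hb, Real.rpow_zero, one_mul, norm_one]
  · set q : ℕ → ℝ := fun n => (⌈p * 2 ^ n⌉₊ : ℝ) / 2 ^ n with hq_def
    have hq_ge : ∀ n, p ≤ q n := fun n => by
      rw [hq_def, le_div_iff₀ (by positivity)]
      exact Nat.le_ceil _
    have hq_le : ∀ n, q n ≤ p + (1 / 2 : ℝ) ^ n := fun n => by
      rw [hq_def, div_le_iff₀ (by positivity)]
      calc (⌈p * 2 ^ n⌉₊ : ℝ) ≤ p * 2 ^ n + 1 := (Nat.ceil_lt_add_one (by positivity)).le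
        _ = (p + (1 / 2 : ℝ) ^ n) * 2 ^ n := by
            rw [add_mul, ← mul_pow]
            norm_num
    have hq_tendsto : Filter.Tendsto q Filter.atTop (nhds p) := by
      have hlim : Filter.Tendsto (fun n : ℕ => p + (1 / 2 : ℝ) ^ n) Filter.atTop (nhds (p + 0)) :=
        Filter.Tendsto.add tendsto_const_nhds
          (tendsto_pow_atTop_nhds_zero_of_lt_one (by norm_num) (by norm_num))
      rw [add_zero] at hlim
      exact tendsto_of_tendsto_of_tendsto_of_le_of_le tendsto_const_nhds hlim hq_ge hq_le
    have hPq : ∀ n, ‖a ^ q n * b ^ q n‖₊ ≤ ‖a * b‖₊ ^ (q n) := fun n => by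
      refine P_dyadic ha hb n ⌈p * 2 ^ n⌉₊ ?_
      refine Nat.ceil_le.mpr ?_
      push_cast
      nlinarith [pow_pos (by norm_num : (0:ℝ) < 2) n]
    have hreal : ∀ n, ‖a ^ q n * b ^ q n‖ ≤ ‖a * b‖ ^ (q n) := fun n => by
      have h := hPq n
      rw [← NNReal.coe_le_coe] at h
      simpa [coe_nnnorm, NNReal.coe_rpow] using h
    have hq_pos : ∀ n, q n ∈ Set.Ioi (0 : ℝ) := fun n => lt_of_lt_of_le hp (hq_ge n)
    have hcont : ContinuousOn (fun t : ℝ => ‖a ^ t * b ^ t‖) (Set.Ioi (0 : ℝ)) :=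
      ((cont_rpow ha).mul (cont_rpow hb)).norm
    have h1 : Filter.Tendsto (fun n => ‖a ^ q n * b ^ q n‖) Filter.atTop
        (nhds ‖a ^ p * b ^ p‖) := by
      exact ((hcont p hp).tendsto).comp
        (tendsto_nhdsWithin_iff.mpr ⟨hq_tendsto, Filter.Eventually.of_forall hq_pos⟩)
    have h2 : Filter.Tendsto (fun n => ‖a * b‖ ^ (q n)) Filter.atTop
        (nhds (‖a * b‖ ^ p)) :=
      (Real.continuousAt_const_rpow' hp.ne').tendsto.comp hq_tendsto
    exact le_of_tendsto_of_tendsto' h1 h2 hreal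

end main

end CordesAux

/-- The `p`-th power of a (self-adjoint, non-negative) bounded operator on a
complex Hilbert space, defined via the continuous functional calculus applied
to `t ↦ t ^ p` on the spectrum. -/
noncomputable def opPow {H : Type*} [NormedAddCommGroup H] [InnerProductSpace ℂ H]
    [CompleteSpace H] (T : H →L[ℂ] H) (p : ℝ) : H →L[ℂ] H :=
  cfc (fun x : ℝ => x ^ p) T

/-- Cordes inequality: for bounded self-adjoint non-negative
operators `T₁, T₂` on a complex Hilbert space and `0 ≤ p ≤ 1`,
`‖T₁^p * T₂^p‖ ≤ ‖T₁ * T₂‖ ^ p`. -/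
theorem stmt_3 {H : Type*} [NormedAddCommGroup H] [InnerProductSpace ℂ H]
    [CompleteSpace H] (T₁ T₂ : H →L[ℂ] H)
    (h₁ : T₁.IsPositive) (h₂ : T₂.IsPositive)
    (p : ℝ) (hp0 : 0 ≤ p) (hp1 : p ≤ 1) :
    ‖opPow T₁ p * opPow T₂ p‖ ≤ ‖T₁ * T₂‖ ^ p := by
  rcases subsingleton_or_nontrivial (H →L[ℂ] H) with hs | hnt
  · have h0 : opPow T₁ p * opPow T₂ p = 0 := Subsingleton.elim _ _
    rw [h0, norm_zero]
    exact Real.rpow_nonneg (norm_nonneg _) p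
  · have hT₁ : (0 : H →L[ℂ] H) ≤ T₁ := (ContinuousLinearMap.nonneg_iff_isPositive _).mpr h₁
    have hT₂ : (0 : H →L[ℂ] H) ≤ T₂ := (ContinuousLinearMap.nonneg_iff_isPositive _).mpr h₂
    have e₁ : opPow T₁ p = T₁ ^ p := (CordesAux.rpow_eq_cfc_real hT₁ p).symm
    have e₂ : opPow T₂ p = T₂ ^ p := (CordesAux.rpow_eq_cfc_real hT₂ p).symm
    rw [e₁, e₂]
    exact CordesAux.cordes hT₁ hT₂ hp0 hp1
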